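/- Let ν be a Borel probability distribution on ℝ and let the combined family of real random variables (ε_i)_{i∈ℤ}, (ε'_i)_{i∈ℤ}, (ε''_i)_{i∈ℤ} on a common probability space be jointly independent, each variable having distribution ν. Let H : (ℕ → ℝ) → ℝ be measurable with respect to the product σ-algebra, let p ≥ 1 and m ≥ 1, and define Y_m = H(j ↦ ε_{m−j}); Y'_m = H(j ↦ (ε'_0 if j = m, else ε_{m−j})) (the innovation at time 0 replaced by an independent copy); and Y_m^{(m)} = H(j ↦ (ε_{m−j} if j ≤ m−1, else ε'_{m−j})) (all innovations at times ≤ 0 replaced by independent copies). If Y_m and Y_m^{(m)} belong to L^p, then ‖Y_m − Y'_m‖_p ≤ 2 ‖Y_m − Y_m^{(m)}‖_p. -/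

import Mathlib

open MeasureTheory Filter ProbabilityTheory

lemma my_iIndepFun_reindex {Ω ι : Type*} [MeasurableSpace Ω] [Nonempty ι] {μ : Measure Ω}
    {f : ι → Ω → ℝ} (hf : iIndepFun f μ)
    {σ : ι → ι} (hσ : Function.Injective σ) :
    iIndepFun (fun i => f (σ i)) μ := by
  classical
  rw [iIndepFun_iff_measure_inter_preimage_eq_mul] at hf ⊢
  intro S sets hsets
  have hinv : ∀ i ∈ S, Function.invFun σ (σ i) = i := fun i _ =>
    Function.leftInverse_invFun hσ i
  have h := hf (S.image σ) (sets := fun j => sets (Function.invFun σ j)) ?_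
  · have h1 : (⋂ j ∈ S.image σ, f j ⁻¹' sets (Function.invFun σ j))
        = ⋂ i ∈ S, f (σ i) ⁻¹' sets i := by
      rw [Finset.set_biInter_finset_image]
      exact Set.iInter₂_congr fun i hi => by rw [hinv i hi]
    have h2 : (∏ j ∈ S.image σ, μ (f j ⁻¹' sets (Function.invFun σ j)))
        = ∏ i ∈ S, μ (f (σ i) ⁻¹' sets i) := by
      rw [Finset.prod_image (fun i _ j _ hij => hσ hij)]
      exact Finset.prod_congr rfl fun i hi => by rw [hinv i hi]
    rw [h1, h2] at h
    exact h
  · intro j hj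
    obtain ⟨i, hi, rfl⟩ := Finset.mem_image.mp hj
    simpa only [hinv i hi] using hsets i hi

lemma my_map_finite_pi {Ω ι : Type*} [MeasurableSpace Ω] (μ : Measure Ω) [IsProbabilityMeasure μ]
    {f : ι → Ω → ℝ} (hmeas : ∀ i, Measurable (f i))
    (hf : iIndepFun f μ) (s : Finset ι) :
    Measure.map (fun ω (i : s) => f i ω) μ
      = Measure.pi (fun i : s => Measure.map (f i) μ) := by
  classical
  have hXm : Measurable (fun ω (i : s) => f i ω) := measurable_pi_lambda _ fun i => hmeas i
  refine (Measure.pi_eq fun A hA => ?_).symm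
  have hApi : MeasurableSet (Set.pi Set.univ A) := MeasurableSet.univ_pi hA
  rw [Measure.map_apply hXm hApi]
  set A' : ι → Set ℝ := fun i => if h : i ∈ s then A ⟨i, h⟩ else Set.univ with hA'
  have hpre : (fun ω (i : s) => f i ω) ⁻¹' Set.pi Set.univ A = ⋂ i ∈ s, f i ⁻¹' A' i := by
    ext ω
    simp only [Set.mem_preimage, Set.mem_pi, Set.mem_univ, forall_true_left, Set.mem_iInter,
      Set.mem_preimage, hA']
    constructor
    · intro h i hi; simp [hi, h ⟨i, hi⟩]
    · intro h i; have := h i i.2; simpa [i.2] using this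
  rw [hpre, hf.measure_inter_preimage_eq_mul s (sets := A')
    (fun i hi => by simp only [hA', dif_pos hi]; exact hA _)]
  rw [← Finset.prod_attach s (fun i => μ (f i ⁻¹' A' i))]
  refine Finset.prod_congr rfl fun i _ => ?_
  rw [Measure.map_apply (hmeas i) (hA i)]
  congr 1
  simp [hA', i.2]

lemma my_map_eq_of_iid {Ω ι : Type*} [MeasurableSpace Ω] [Nonempty ι] (μ : Measure Ω)
    [IsProbabilityMeasure μ] (ν : Measure ℝ) [IsProbabilityMeasure ν]
    {f g : ι → Ω → ℝ} (hfm : ∀ i, Measurable (f i)) (hgm : ∀ i, Measurable (g i))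
    (hf : iIndepFun f μ) (hg : iIndepFun g μ)
    (hfd : ∀ i, Measure.map (f i) μ = ν) (hgd : ∀ i, Measure.map (g i) μ = ν) :
    Measure.map (fun ω i => f i ω) μ = Measure.map (fun ω i => g i ω) μ := by
  have hXf : Measurable (fun ω i => f i ω) := measurable_pi_lambda _ hfm
  have hXg : Measurable (fun ω i => g i ω) := measurable_pi_lambda _ hgm
  have : IsProbabilityMeasure (Measure.map (fun ω i => f i ω) μ) :=
    Measure.isProbabilityMeasure_map hXf.aemeasurable
  have : IsProbabilityMeasure (Measure.map (fun ω i => g i ω) μ) :=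
    Measure.isProbabilityMeasure_map hXg.aemeasurable
  refine MeasureTheory.ext_of_generate_finite (measurableCylinders (fun _ : ι => ℝ))
    generateFrom_measurableCylinders.symm isPiSystem_measurableCylinders (fun t ht => ?_)
    (by simp)
  obtain ⟨s, S, hS, rfl⟩ := (mem_measurableCylinders _).mp ht
  have key : ∀ (h : ι → Ω → ℝ), Measurable (fun ω i => h i ω) →
      (fun ω i => h i ω) ⁻¹' (cylinder s S) = (fun ω (i : s) => h i ω) ⁻¹' S := by
    intro h _; rfl
  rw [Measure.map_apply hXf (hS.cylinder s), Measure.map_apply hXg (hS.cylinder s),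
    key f hXf, key g hXg,
    ← Measure.map_apply (measurable_pi_lambda _ fun i : s => hfm i) hS,
    ← Measure.map_apply (measurable_pi_lambda _ fun i : s => hgm i) hS,
    my_map_finite_pi μ hfm hf s, my_map_finite_pi μ hgm hg s]
  have : (fun i : s => Measure.map (f i) μ) = (fun i : s => Measure.map (g i) μ) :=
    funext fun i => by rw [hfd, hgd]
  rw [this]

open MeasureTheory Filter ProbabilityTheory

theorem stmt1 {Ω : Type*} [MeasurableSpace Ω] (μ : Measure Ω) [IsProbabilityMeasure μ]
    (ν : Measure ℝ) [IsProbabilityMeasure ν]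
    (ε : Fin 3 × ℤ → Ω → ℝ) (hmeas : ∀ i, Measurable (ε i))
    (hindep : iIndepFun ε μ)
    (hdist : ∀ i, Measure.map (ε i) μ = ν)
    (H : (ℕ → ℝ) → ℝ) (hH : Measurable H)
    (p : ℝ) (hp : 1 ≤ p) (m : ℕ) (hm : 1 ≤ m)
    (Y Y' Ym : Ω → ℝ)
    (hY : Y = fun ω => H (fun j => ε (0, (m : ℤ) - (j : ℤ)) ω))
    (hY' : Y' = fun ω => H (fun j =>
      if j = m then ε (1, 0) ω else ε (0, (m : ℤ) - (j : ℤ)) ω))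
    (hYm : Ym = fun ω => H (fun j =>
      if j ≤ m - 1 then ε (0, (m : ℤ) - (j : ℤ)) ω else ε (1, (m : ℤ) - (j : ℤ)) ω))
    (hYLp : MemLp Y (ENNReal.ofReal p) μ)
    (hYmLp : MemLp Ym (ENNReal.ofReal p) μ) :
    eLpNorm (Y - Y') (ENNReal.ofReal p) μ ≤ 2 * eLpNorm (Y - Ym) (ENNReal.ofReal p) μ := by
  classical
  set q := ENNReal.ofReal p with hq'
  have hq : 1 ≤ q := ENNReal.one_le_ofReal.mpr hp
  -- the auxiliary coupled variable using the third family of innovations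
  set V : Ω → ℝ := fun ω => H (fun j =>
      if j ≤ m - 1 then ε (0, (m : ℤ) - (j : ℤ)) ω else ε (2, (m : ℤ) - (j : ℤ)) ω) with hV
  -- the functional giving Y - Ym as a function of the whole innovation array
  set F : ((Fin 3 × ℤ) → ℝ) → ℝ := fun x =>
      H (fun j => x (0, (m : ℤ) - (j : ℤ))) -
      H (fun j => if j ≤ m - 1 then x (0, (m : ℤ) - (j : ℤ)) else x (1, (m : ℤ) - (j : ℤ)))
    with hF
  have hFmeas : Measurable F := by
    apply Measurable.sub
    · exact hH.comp (measurable_pi_lambda _ fun j => measurable_pi_apply _)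
    · refine hH.comp (measurable_pi_lambda _ fun j => ?_)
      by_cases h : j ≤ m - 1 <;> simp only [h, if_true, if_false] <;>
        exact measurable_pi_apply _
  -- reindexing maps
  set c1 : Fin 3 → Fin 3 := fun v => if v = 1 then 2 else if v = 2 then 1 else v with hc1
  set σ1 : Fin 3 × ℤ → Fin 3 × ℤ := fun r => (c1 r.1, r.2) with hσ1
  have hc1inj : Function.Injective c1 := by rw [hc1]; decide
  have hσ1inj : Function.Injective σ1 := fun a b h => by
    simp only [hσ1, Prod.mk.injEq] at h
    exact Prod.ext (hc1inj h.1) h.2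
  set c2 : ℤ → Fin 3 → Fin 3 := fun i v =>
      if 1 ≤ i then v
      else if i = 0 then (if v = 0 then 2 else if v = 2 then 0 else v)
      else (if v = 0 then 2 else if v = 1 then 0 else 1) with hc2
  set σ2 : Fin 3 × ℤ → Fin 3 × ℤ := fun r => (c2 r.2 r.1, r.2) with hσ2
  have hc2inj : ∀ i, Function.Injective (c2 i) := by
    intro i
    rw [hc2]
    by_cases h1 : 1 ≤ i
    · simp only [h1, if_true]; exact fun a b h => h
    · by_cases h0 : i = 0 <;> simp only [h1, h0, if_true, if_false] <;> decide
  have hσ2inj : Function.Injective σ2 := fun a b h => by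
    simp only [hσ2, Prod.mk.injEq] at h
    obtain ⟨h1, h2⟩ := h
    rw [h2] at h1
    exact Prod.ext (hc2inj b.2 h1) h2
  -- measurability of the basic random variables
  have hYmeas : Measurable Y := by
    rw [hY]; exact hH.comp (measurable_pi_lambda _ fun j => hmeas _)
  have hY'meas : Measurable Y' := by
    rw [hY']
    refine hH.comp (measurable_pi_lambda _ fun j => ?_)
    by_cases h : j = m <;> simp only [h, if_true, if_false] <;> exact hmeas _
  have hVmeas : Measurable V := by
    rw [hV]
    refine hH.comp (measurable_pi_lambda _ fun j => ?_)
    by_cases h : j ≤ m - 1 <;> simp only [h, if_true, if_false] <;> exact hmeas _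
  -- equal laws of the three innovation arrays
  have hind1 : iIndepFun (fun i => ε (σ1 i)) μ :=
    my_iIndepFun_reindex hindep hσ1inj
  have hind2 : iIndepFun (fun i => ε (σ2 i)) μ :=
    my_iIndepFun_reindex hindep hσ2inj
  have hmap1 : Measure.map (fun ω i => ε (σ1 i) ω) μ = Measure.map (fun ω i => ε i ω) μ :=
    my_map_eq_of_iid μ ν (fun i => hmeas _) hmeas hind1 hindep (fun i => hdist _) hdist
  have hmap2 : Measure.map (fun ω i => ε (σ2 i) ω) μ = Measure.map (fun ω i => ε i ω) μ :=
    my_map_eq_of_iid μ ν (fun i => hmeas _) hmeas hind2 hindep (fun i => hdist _) hdist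
  -- evaluation facts about σ1, σ2
  have hc1v0 : c1 0 = 0 := by rw [hc1]; decide
  have hc1v1 : c1 1 = 2 := by rw [hc1]; decide
  have hσ1_0 : ∀ i : ℤ, σ1 (0, i) = (0, i) := fun i => by
    rw [hσ1]; show (c1 0, i) = ((0 : Fin 3), i); rw [hc1v0]
  have hσ1_1 : ∀ i : ℤ, σ1 (1, i) = (2, i) := fun i => by
    rw [hσ1]; show (c1 1, i) = ((2 : Fin 3), i); rw [hc1v1]
  have hc2v0 : ∀ i : ℤ, c2 i 0 = if 1 ≤ i then 0 else 2 := fun i => by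
    rw [hc2]
    by_cases h1 : 1 ≤ i
    · simp [h1]
    · by_cases h0 : i = 0 <;> simp [h1, h0]
  have hc2v1 : ∀ i : ℤ, i ≤ 0 → c2 i 1 = if i = 0 then 1 else 0 := fun i hi => by
    rw [hc2]
    have h1 : ¬ (1 ≤ i) := by omega
    by_cases h0 : i = 0 <;> simp [h1, h0]
  have hσ2_0 : ∀ i : ℤ, σ2 (0, i) = if 1 ≤ i then (0, i) else (2, i) := fun i => by
    rw [hσ2]
    show (c2 i 0, i) = _
    rw [hc2v0]
    by_cases h1 : 1 ≤ i <;> simp [h1]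
  have hσ2_1 : ∀ i : ℤ, i ≤ 0 → σ2 (1, i) = if i = 0 then (1, 0) else (0, i) := fun i hi => by
    rw [hσ2]
    show (c2 i 1, i) = _
    rw [hc2v1 i hi]
    by_cases h0 : i = 0 <;> simp [h0]
  -- the three differences as functionals of the innovation arrays
  have e1 : Y - Ym = F ∘ (fun ω i => ε i ω) := by
    funext ω
    show Y ω - Ym ω = F (fun i => ε i ω)
    rw [hY, hYm, hF]
  have e2 : Y - V = F ∘ (fun ω i => ε (σ1 i) ω) := by
    funext ω
    show Y ω - V ω = F (fun i => ε (σ1 i) ω)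
    have a1 : (fun j : ℕ => ε (σ1 (0, (m : ℤ) - (j : ℤ))) ω)
        = fun j : ℕ => ε (0, (m : ℤ) - (j : ℤ)) ω :=
      funext fun j => by rw [hσ1_0]
    have a2 : (fun j : ℕ => if j ≤ m - 1 then ε (σ1 (0, (m : ℤ) - (j : ℤ))) ω
          else ε (σ1 (1, (m : ℤ) - (j : ℤ))) ω)
        = fun j : ℕ => if j ≤ m - 1 then ε (0, (m : ℤ) - (j : ℤ)) ω
          else ε (2, (m : ℤ) - (j : ℤ)) ω :=
      funext fun j => by
        by_cases h : j ≤ m - 1 <;> simp only [h, if_true, if_false]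
        · rw [hσ1_0]
        · rw [hσ1_1]
    rw [hY, hV, hF]
    show H (fun j : ℕ => ε (0, (m : ℤ) - (j : ℤ)) ω)
        - H (fun j : ℕ => if j ≤ m - 1 then ε (0, (m : ℤ) - (j : ℤ)) ω
            else ε (2, (m : ℤ) - (j : ℤ)) ω)
        = H (fun j : ℕ => ε (σ1 (0, (m : ℤ) - (j : ℤ))) ω)
        - H (fun j : ℕ => if j ≤ m - 1 then ε (σ1 (0, (m : ℤ) - (j : ℤ))) ω
            else ε (σ1 (1, (m : ℤ) - (j : ℤ))) ω)
    rw [a1, a2]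
  have e3 : V - Y' = F ∘ (fun ω i => ε (σ2 i) ω) := by
    funext ω
    show V ω - Y' ω = F (fun i => ε (σ2 i) ω)
    have a1 : (fun j : ℕ => ε (σ2 (0, (m : ℤ) - (j : ℤ))) ω)
        = fun j : ℕ => if j ≤ m - 1 then ε (0, (m : ℤ) - (j : ℤ)) ω
          else ε (2, (m : ℤ) - (j : ℤ)) ω :=
      funext fun j => by
        rw [hσ2_0]
        by_cases h : j ≤ m - 1
        · have h' : 1 ≤ (m : ℤ) - (j : ℤ) := by omega
          rw [if_pos h', if_pos h]
        · have h' : ¬ (1 ≤ (m : ℤ) - (j : ℤ)) := by omega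
          rw [if_neg h', if_neg h]
    have a2 : (fun j : ℕ => if j ≤ m - 1 then ε (σ2 (0, (m : ℤ) - (j : ℤ))) ω
          else ε (σ2 (1, (m : ℤ) - (j : ℤ))) ω)
        = fun j : ℕ => if j = m then ε (1, 0) ω else ε (0, (m : ℤ) - (j : ℤ)) ω :=
      funext fun j => by
        by_cases h : j ≤ m - 1
        · have hjm : ¬ (j = m) := by omega
          have h' : 1 ≤ (m : ℤ) - (j : ℤ) := by omega
          rw [if_pos h, if_neg hjm, hσ2_0, if_pos h']
        · have hle : (m : ℤ) - (j : ℤ) ≤ 0 := by omega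
          rw [if_neg h, hσ2_1 _ hle]
          by_cases hjm : j = m
          · have hz : (m : ℤ) - (j : ℤ) = 0 := by omega
            rw [if_pos hz, if_pos hjm]
          · have hz : ¬ ((m : ℤ) - (j : ℤ) = 0) := by omega
            rw [if_neg hz, if_neg hjm]
    rw [hV, hY', hF]
    show H (fun j : ℕ => if j ≤ m - 1 then ε (0, (m : ℤ) - (j : ℤ)) ω
            else ε (2, (m : ℤ) - (j : ℤ)) ω)
        - H (fun j : ℕ => if j = m then ε (1, 0) ω else ε (0, (m : ℤ) - (j : ℤ)) ω)
        = H (fun j : ℕ => ε (σ2 (0, (m : ℤ) - (j : ℤ))) ω)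
        - H (fun j : ℕ => if j ≤ m - 1 then ε (σ2 (0, (m : ℤ) - (j : ℤ))) ω
            else ε (σ2 (1, (m : ℤ) - (j : ℤ))) ω)
    rw [a1, a2]
  -- rewriting the L^p norms through the common law
  have hX : Measurable (fun ω (i : Fin 3 × ℤ) => ε i ω) := measurable_pi_lambda _ hmeas
  have hX1 : Measurable (fun ω (i : Fin 3 × ℤ) => ε (σ1 i) ω) :=
    measurable_pi_lambda _ fun i => hmeas _
  have hX2 : Measurable (fun ω (i : Fin 3 × ℤ) => ε (σ2 i) ω) :=
    measurable_pi_lambda _ fun i => hmeas _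
  have n1 : eLpNorm (Y - Ym) q μ = eLpNorm F q (Measure.map (fun ω i => ε i ω) μ) := by
    rw [e1, ← eLpNorm_map_measure hFmeas.aestronglyMeasurable hX.aemeasurable]
  have n2 : eLpNorm (Y - V) q μ = eLpNorm (Y - Ym) q μ := by
    rw [e2, ← eLpNorm_map_measure hFmeas.aestronglyMeasurable hX1.aemeasurable, hmap1, ← n1]
  have n3 : eLpNorm (V - Y') q μ = eLpNorm (Y - Ym) q μ := by
    rw [e3, ← eLpNorm_map_measure hFmeas.aestronglyMeasurable hX2.aemeasurable, hmap2, ← n1]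
  have hsplit : Y - Y' = (Y - V) + (V - Y') := (sub_add_sub_cancel Y V Y').symm
  calc eLpNorm (Y - Y') q μ = eLpNorm ((Y - V) + (V - Y')) q μ := by rw [← hsplit]
    _ ≤ eLpNorm (Y - V) q μ + eLpNorm (V - Y') q μ :=
        eLpNorm_add_le ((hYmeas.sub hVmeas).aestronglyMeasurable)
          ((hVmeas.sub hY'meas).aestronglyMeasurable) hq
    _ = 2 * eLpNorm (Y - Ym) q μ := by rw [n2, n3, two_mul]
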